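/- arXiv:2507.11125 — 4 statements merged into one kernel-verified Lean document; each statement's English description precedes it below -/
import Mathlib

section
/- Let g be a compact Lie algebra of rank two and let h be a nonzero Lie subalgebra of g whose normalizer in g does not contain a Cartan subalgebra of g (i.e. h is not regular). Then h equals its own normalizer in g. -/
open Module

/-- A real Lie algebra is *compact* if it admits an ad-invariant inner product. -/
def IsCompactLieAlgebra (g : Type*) [LieRing g] [LieAlgebra ℝ g] : Prop :=
  ∃ Φ : g →ₗ[ℝ] g →ₗ[ℝ] ℝ,
    (∀ x : g, x ≠ 0 → 0 < Φ x x) ∧ (∀ x y : g, Φ x y = Φ y x) ∧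
    (∀ x y z : g, Φ ⁅x, y⁆ z = - Φ y ⁅x, z⁆)

/-- A Cartan subalgebra of a compact Lie algebra: a maximal abelian Lie subalgebra. -/
def IsMaxAbelian {g : Type*} [LieRing g] [LieAlgebra ℝ g] (t : LieSubalgebra ℝ g) : Prop :=
  IsLieAbelian ↥t ∧ ∀ t' : LieSubalgebra ℝ g, IsLieAbelian ↥t' → t ≤ t' → t' = t

/-- Every abelian Lie subalgebra of a finite-dimensional Lie algebra is contained in a
maximal abelian subalgebra. -/
lemma exists_maxAbelian {g : Type*} [LieRing g] [LieAlgebra ℝ g] [FiniteDimensional ℝ g]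
    (t : LieSubalgebra ℝ g) (ht : IsLieAbelian ↥t) :
    ∃ t' : LieSubalgebra ℝ g, IsMaxAbelian t' ∧ t ≤ t' := by
  set S : Set ℕ := {n | ∃ t' : LieSubalgebra ℝ g, IsLieAbelian ↥t' ∧ t ≤ t' ∧ finrank ℝ t' = n}
    with hS
  have hne : S.Nonempty := ⟨finrank ℝ t, t, ht, le_rfl, rfl⟩
  have hbdd : BddAbove S := by
    refine ⟨finrank ℝ g, ?_⟩
    rintro n ⟨t', -, -, rfl⟩
    exact t'.toSubmodule.finrank_le
  obtain ⟨t', ht', htt', hrk⟩ := Nat.sSup_mem hne hbdd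
  refine ⟨t', ⟨ht', ?_⟩, htt'⟩
  intro t'' ht'' hle
  have h1 : finrank ℝ t'' ≤ finrank ℝ t' := by
    rw [hrk]
    exact le_csSup hbdd ⟨t'', ht'', htt'.trans hle, rfl⟩
  have h2 : (t'.toSubmodule : Submodule ℝ g) = t''.toSubmodule :=
    Submodule.eq_of_le_of_finrank_le (fun x hx => hle hx) h1
  exact LieSubalgebra.toSubmodule_injective h2.symm

/-- If `g` is a compact Lie algebra of rank two and `h` is a nonzero non-regular subalgebra
(its normalizer contains no Cartan subalgebra of `g`), then `h` is self-normalizing. -/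
theorem selfNormalizing_of_nonregular (g : Type*) [LieRing g] [LieAlgebra ℝ g]
    [FiniteDimensional ℝ g] (hcpt : IsCompactLieAlgebra g)
    (hrank : ∀ t : LieSubalgebra ℝ g, IsMaxAbelian t → finrank ℝ t = 2)
    (h : LieSubalgebra ℝ g) (hne : h ≠ ⊥)
    (hnotreg : ¬ ∃ t : LieSubalgebra ℝ g, IsMaxAbelian t ∧ t ≤ h.normalizer) :
    h.normalizer = h := by
  obtain ⟨Φ, hpos, hsymm, hinv⟩ := hcpt
  by_contra hcon
  set N := h.normalizer with hN
  have hle : h ≤ N := h.le_normalizer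
  have hlt : (h.toSubmodule : Submodule ℝ g) < N.toSubmodule := by
    refine lt_of_le_of_ne (fun x hx => hle hx) (fun e => hcon ?_)
    exact (LieSubalgebra.toSubmodule_injective e).symm
  -- Find a nonzero element of the normalizer orthogonal to h.
  let F : N.toSubmodule →ₗ[ℝ] (h.toSubmodule →ₗ[ℝ] ℝ) := Φ.domRestrict₁₂ _ _
  have hker : LinearMap.ker F ≠ ⊥ := by
    intro e
    have h3 := LinearMap.finrank_range_add_finrank_ker F
    rw [e, finrank_bot] at h3
    have h4 : finrank ℝ (LinearMap.range F) ≤ finrank ℝ (h.toSubmodule →ₗ[ℝ] ℝ) :=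
      (LinearMap.range F).finrank_le
    have h5 : finrank ℝ (h.toSubmodule →ₗ[ℝ] ℝ) = finrank ℝ h.toSubmodule :=
      Subspace.dual_finrank_eq
    have h6 := Submodule.finrank_lt_finrank_of_lt hlt
    omega
  obtain ⟨v, hvk, hv0⟩ := (Submodule.ne_bot_iff _).mp hker
  set x : g := (v : g) with hxdef
  have hx0 : x ≠ 0 := fun e => hv0 (Subtype.ext e)
  have hxN : x ∈ N := v.2
  have hxperp : ∀ y ∈ h, Φ x y = 0 := by
    intro y hy
    have : F v ⟨y, hy⟩ = 0 := by rw [hvk]; rfl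
    exact this
  -- x is not in h
  have hxh : x ∉ h := fun hx => absurd (hxperp x hx) (ne_of_gt (hpos x hx0))
  -- x commutes with everything in h
  have hcomm : ∀ y ∈ h, ⁅x, y⁆ = 0 := by
    intro y hy
    have hm : ⁅x, y⁆ ∈ h := (h.mem_normalizer_iff x).mp hxN y hy
    by_contra hne0
    have hp := hpos _ hne0
    have h0 : Φ ⁅x, y⁆ ⁅x, y⁆ = 0 := by
      have e1 : Φ ⁅x, y⁆ ⁅x, y⁆ = - Φ ⁅y, x⁆ ⁅x, y⁆ := by
        rw [← lie_skew y x, map_neg, LinearMap.neg_apply, neg_neg]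
      rw [e1, hinv y x ⁅x, y⁆, neg_neg]
      exact hxperp _ (h.lie_mem hy hm)
    exact absurd h0 (ne_of_gt hp)
  -- pick a nonzero element of h
  have hbot : h.toSubmodule ≠ ⊥ := by
    intro e
    apply hne
    apply LieSubalgebra.toSubmodule_injective
    rw [e]; rfl
  obtain ⟨y, hy, hy0⟩ := (Submodule.ne_bot_iff _).mp hbot
  have hxy : ⁅x, y⁆ = 0 := hcomm y hy
  -- linear independence of x and y
  have hind : LinearIndependent ℝ ![x, y] := by
    rw [LinearIndependent.pair_iff]
    intro a b hab
    have h1 : Φ x (a • x + b • y) = a * Φ x x := by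
      rw [map_add, map_smul, map_smul, hxperp y hy]
      simp
    rw [hab, map_zero] at h1
    have ha : a = 0 := by
      rcases mul_eq_zero.mp h1.symm with h' | h'
      · exact h'
      · exact absurd h' (ne_of_gt (hpos x hx0))
    refine ⟨ha, ?_⟩
    rw [ha, zero_smul, zero_add] at hab
    rcases smul_eq_zero.mp hab with h' | h'
    · exact h'
    · exact absurd h' hy0
  -- the span of x and y is an abelian Lie subalgebra
  set p : Submodule ℝ g := Submodule.span ℝ {x, y} with hp
  have hgen : ∀ u : g, ⁅u, x⁆ = 0 → ⁅u, y⁆ = 0 → ∀ w ∈ p, ⁅u, w⁆ = 0 := by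
    intro u hux huy w hw
    have hker : p ≤ LinearMap.ker (LieAlgebra.ad ℝ g u) := by
      rw [hp, Submodule.span_le]
      rintro z (rfl | rfl)
      · simpa using hux
      · simpa using huy
    simpa using hker hw
  have h1 : ∀ w ∈ p, ⁅x, w⁆ = 0 := hgen x (lie_self x) hxy
  have h2 : ∀ w ∈ p, ⁅y, w⁆ = 0 :=
    hgen y (by rw [← lie_skew, hxy, neg_zero]) (lie_self y)
  have hbr : ∀ u ∈ p, ∀ w ∈ p, ⁅u, w⁆ = 0 := by
    intro u hu w hw
    have h3 : ∀ z ∈ p, ⁅w, z⁆ = 0 :=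
      hgen w (by rw [← lie_skew, h1 w hw, neg_zero]) (by rw [← lie_skew, h2 w hw, neg_zero])
    rw [← lie_skew, h3 u hu, neg_zero]
  -- form the Lie subalgebra
  let t : LieSubalgebra ℝ g :=
    { p with lie_mem' := fun {u w} hu hw => hbr u hu w hw ▸ p.zero_mem }
  have hmemt : ∀ z : g, z ∈ t ↔ z ∈ p := fun z => Iff.rfl
  have htab : IsLieAbelian ↥t :=
    ⟨fun a b => Subtype.ext (hbr _ a.2 _ b.2)⟩
  have hxt : x ∈ t := Submodule.subset_span (Set.mem_insert _ _)
  have hyt : y ∈ t := Submodule.subset_span (Set.mem_insert_of_mem _ rfl)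
  -- t is contained in the normalizer
  have htN : t ≤ N := by
    intro z hz
    have hsub : p ≤ N.toSubmodule := by
      rw [hp, Submodule.span_le]
      rintro w (rfl | rfl)
      · exact hxN
      · exact hle hy
    exact hsub hz
  -- t has dimension at least 2
  obtain ⟨t', ⟨ht'ab, ht'max⟩, htt'⟩ := exists_maxAbelian t htab
  have h2rk : finrank ℝ t' = 2 := hrank t' ⟨ht'ab, ht'max⟩
  have hge : 2 ≤ finrank ℝ t := by
    have hindt : LinearIndependent ℝ (fun i => (![⟨x, hxt⟩, ⟨y, hyt⟩] i : t)) := by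
      apply LinearIndependent.of_comp t.toSubmodule.subtype
      convert hind using 1
      ext i
      fin_cases i <;> rfl
      rfl
    simpa using hindt.fintype_card_le_finrank
  -- so t = t' is maximal abelian, contradiction
  have heq : (t'.toSubmodule : Submodule ℝ g) = t.toSubmodule := by
    apply Submodule.eq_of_le_of_finrank_le (fun z hz => htt' hz) (le_trans (le_of_eq h2rk) hge) |>.symm
  have : t' = t := LieSubalgebra.toSubmodule_injective heq
  exact hnotreg ⟨t', ⟨ht'ab, ht'max⟩, this ▸ htN⟩
end

section
/- Let G be a compact connected simple Lie group with Lie algebra g and Killing form B, let Λ : g → g be a B-symmetric endomorphism defining a left-invariant geodesic-orbit metric with respect to a subgroup H with Lie algebra h (i.e. for every X ∈ g there exists W ∈ h with [W + X, Λ X] = 0, and Λ is ad_h-equivariant). If g₁, g₂ ⊆ g are eigenspaces of Λ with eigenvalues λ₁, λ₂ and the bracket [g₁, g₂] has nonzero B-orthogonal projection onto the B-orthogonal complement of g₁ ⊕ g₂, then λ₁ = λ₂. -/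
open Module

/-- Eigenvalue lemma for geodesic orbit metrics on a compact simple Lie group: if `Λ` is a
`B`-symmetric, `ad_h`-equivariant metric endomorphism satisfying the geodesic orbit
condition with respect to `h`, and the bracket of the `λ₁`- and `λ₂`-eigenspaces of `Λ`
has nonzero `B`-orthogonal projection onto the `B`-orthogonal complement of their sum,
then `λ₁ = λ₂`. -/
theorem eigenvalues_eq_of_bracket_projection (g : Type*) [LieRing g] [LieAlgebra ℝ g]
    [FiniteDimensional ℝ g] (hcpt : IsCompactLieAlgebra g)
    (hsimple : LieAlgebra.IsSimple ℝ g)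
    (h : LieSubalgebra ℝ g) (Λ : g →ₗ[ℝ] g)
    (hsymm : ∀ x y : g, killingForm ℝ g (Λ x) y = killingForm ℝ g x (Λ y))
    (hequiv : ∀ Z ∈ h, ∀ x : g, Λ ⁅Z, x⁆ = ⁅Z, Λ x⁆)
    (hgo : ∀ X : g, ∃ W ∈ h, ⁅W + X, Λ X⁆ = 0)
    (l₁ l₂ : ℝ)
    (hproj : ∃ X₁ ∈ LinearMap.ker (Λ - l₁ • (LinearMap.id : g →ₗ[ℝ] g)),
      ∃ X₂ ∈ LinearMap.ker (Λ - l₂ • (LinearMap.id : g →ₗ[ℝ] g)), ∃ Z : g,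
        (∀ u ∈ LinearMap.ker (Λ - l₁ • (LinearMap.id : g →ₗ[ℝ] g)),
          killingForm ℝ g Z u = 0) ∧
        (∀ u ∈ LinearMap.ker (Λ - l₂ • (LinearMap.id : g →ₗ[ℝ] g)),
          killingForm ℝ g Z u = 0) ∧
        killingForm ℝ g Z ⁅X₁, X₂⁆ ≠ 0) :
    l₁ = l₂ := by
  obtain ⟨X₁, hX₁, X₂, hX₂, Z, hZ₁, hZ₂, hZne⟩ := hproj
  obtain ⟨W, hWh, hW⟩ := hgo (X₁ + X₂)
  rw [LinearMap.mem_ker] at hX₁ hX₂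
  have e₁ : Λ X₁ = l₁ • X₁ := by
    have := hX₁
    simp only [LinearMap.sub_apply, LinearMap.smul_apply, LinearMap.id_apply,
      sub_eq_zero] at this
    exact this
  have e₂ : Λ X₂ = l₂ • X₂ := by
    have := hX₂
    simp only [LinearMap.sub_apply, LinearMap.smul_apply, LinearMap.id_apply,
      sub_eq_zero] at this
    exact this
  have hm₁ : ⁅W, X₁⁆ ∈ LinearMap.ker (Λ - l₁ • (LinearMap.id : g →ₗ[ℝ] g)) := by
    rw [LinearMap.mem_ker]
    simp [hequiv W hWh X₁, e₁, lie_smul]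
  have hm₂ : ⁅W, X₂⁆ ∈ LinearMap.ker (Λ - l₂ • (LinearMap.id : g →ₗ[ℝ] g)) := by
    rw [LinearMap.mem_ker]
    simp [hequiv W hWh X₂, e₂, lie_smul]
  have key : l₁ • ⁅W, X₁⁆ + l₂ • ⁅W, X₂⁆ + (l₂ - l₁) • ⁅X₁, X₂⁆ = 0 := by
    have h0 := hW
    rw [map_add, e₁, e₂] at h0
    have hskew : ⁅X₂, X₁⁆ = -⁅X₁, X₂⁆ := by rw [← lie_skew X₂ X₁]
    simp only [add_lie, lie_add, lie_smul, lie_self, smul_zero, hskew,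
      smul_neg] at h0
    rw [← h0]
    module
  have hfin := congrArg (fun v => killingForm ℝ g Z v) key
  simp only [map_add, map_smul, map_zero, smul_eq_mul,
    hZ₁ _ hm₁, hZ₂ _ hm₂, mul_zero, zero_add, add_zero] at hfin
  have : l₂ - l₁ = 0 := by
    rcases mul_eq_zero.mp hfin with h' | h'
    · exact h'
    · exact absurd h' hZne
  linarith
end

section
/- Let g be a Lie algebra, h ⊆ g a subalgebra, and Λ : g → g a linear endomorphism commuting with ad_Z for all Z ∈ h, with eigenspaces g₁, g₂ for eigenvalues λ₁, λ₂. Suppose for every X ∈ g there exists W ∈ h with [W + X, ΛX] = 0. Then for all X₁ ∈ g₁ and X₂ ∈ g₂, the vector (λ₁ − λ₂)[X₁, X₂] lies in g₁ + g₂. -/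
/-- Key computation in the eigenvalue lemma: if `Λ` commutes with `ad_Z` for all `Z` in a
subalgebra `h` and the geodesic orbit condition holds, then for eigenvectors `X₁, X₂` of `Λ`
with eigenvalues `λ₁, λ₂`, the vector `(λ₁ − λ₂)[X₁, X₂]` lies in the sum of the two
eigenspaces. -/
theorem bracket_mem_sum_eigenspaces (g : Type*) [LieRing g] [LieAlgebra ℝ g]
    (h : LieSubalgebra ℝ g) (Λ : g →ₗ[ℝ] g)
    (hequiv : ∀ Z ∈ h, ∀ x : g, Λ ⁅Z, x⁆ = ⁅Z, Λ x⁆)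
    (hgo : ∀ X : g, ∃ W ∈ h, ⁅W + X, Λ X⁆ = 0)
    (l₁ l₂ : ℝ) :
    ∀ X₁ ∈ LinearMap.ker (Λ - l₁ • (LinearMap.id : g →ₗ[ℝ] g)),
    ∀ X₂ ∈ LinearMap.ker (Λ - l₂ • (LinearMap.id : g →ₗ[ℝ] g)),
      (l₁ - l₂) • ⁅X₁, X₂⁆ ∈
        LinearMap.ker (Λ - l₁ • (LinearMap.id : g →ₗ[ℝ] g)) ⊔
          LinearMap.ker (Λ - l₂ • (LinearMap.id : g →ₗ[ℝ] g)) := by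
  intro X₁ hX₁ X₂ hX₂
  rw [LinearMap.mem_ker, LinearMap.sub_apply, LinearMap.smul_apply, LinearMap.id_apply,
    sub_eq_zero] at hX₁ hX₂
  obtain ⟨W, hW, hWb⟩ := hgo (X₁ + X₂)
  -- expand the bracket relation
  have hexp : l₁ • ⁅W, X₁⁆ + l₂ • ⁅W, X₂⁆ - (l₁ - l₂) • ⁅X₁, X₂⁆ = 0 := by
    have : Λ (X₁ + X₂) = l₁ • X₁ + l₂ • X₂ := by rw [map_add, hX₁, hX₂]
    rw [this] at hWb
    have := hWb
    simp only [add_lie, lie_add, lie_smul, lie_self, smul_zero] at this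
    have hskew : ⁅X₂, X₁⁆ = -⁅X₁, X₂⁆ := by rw [← lie_skew]
    rw [hskew] at this
    rw [sub_smul]
    abel_nf
    abel_nf at this
    linear_combination (norm := module) this
  have key : (l₁ - l₂) • ⁅X₁, X₂⁆ = l₁ • ⁅W, X₁⁆ + l₂ • ⁅W, X₂⁆ := by
    linear_combination (norm := module) - hexp
  rw [key]
  have mem1 : (⁅W, X₁⁆ : g) ∈ LinearMap.ker (Λ - l₁ • (LinearMap.id : g →ₗ[ℝ] g)) := by
    rw [LinearMap.mem_ker, LinearMap.sub_apply, LinearMap.smul_apply, LinearMap.id_apply,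
      sub_eq_zero, hequiv W hW, hX₁, lie_smul]
  have mem2 : (⁅W, X₂⁆ : g) ∈ LinearMap.ker (Λ - l₂ • (LinearMap.id : g →ₗ[ℝ] g)) := by
    rw [LinearMap.mem_ker, LinearMap.sub_apply, LinearMap.smul_apply, LinearMap.id_apply,
      sub_eq_zero, hequiv W hW, hX₂, lie_smul]
  exact Submodule.add_mem_sup (Submodule.smul_mem _ _ mem1) (Submodule.smul_mem _ _ mem2)
end

section
/- Let g be a compact simple Lie algebra with Killing form B, and suppose g decomposes B-orthogonally as g = k ⊕ m₁ ⊕ m₂ ⊕ m₃, where the mᵢ are ad_k-invariant subspaces satisfying [mᵢ, mⱼ] ⊆ mₖ for distinct i, j, k, with [mᵢ, mⱼ] ≠ 0 for each pair of distinct i, j. Let Λ be a B-symmetric endomorphism acting as μᵢ·Id on each mᵢ and preserving k, satisfying the geodesic orbit condition with respect to h = k (for all X ∈ g there is W ∈ k with [W + X, ΛX] = 0) and ad_k-equivariance. Then μ₁ = μ₂ = μ₃. -/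
lemma killingForm_definite_of_compact_simple (g : Type*) [LieRing g] [LieAlgebra ℝ g]
    [FiniteDimensional ℝ g] (hcpt : IsCompactLieAlgebra g)
    (hsimple : LieAlgebra.IsSimple ℝ g) (v : g) (hv : v ≠ 0) :
    killingForm ℝ g v v ≠ 0 := by
  obtain ⟨Φ, hpos, hsym, hinv⟩ := hcpt
  intro hK
  letI core : InnerProductSpace.Core ℝ g :=
    { inner := fun x y => Φ x y
      conj_inner_symm := fun x y => by simpa using hsym y x
      re_inner_nonneg := fun x => by
        rcases eq_or_ne x 0 with rfl | hx
        · simp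
        · exact le_of_lt (by simpa using hpos x hx)
      add_left := fun x y z => by simp
      smul_left := fun x y r => by simp
      definite := fun x hx => by
        by_contra h
        exact absurd hx (ne_of_gt (hpos x h)) }
  letI : NormedAddCommGroup g := core.toNormedAddCommGroup
  letI : InnerProductSpace ℝ g := InnerProductSpace.ofCore core.toCore
  have hInner : ∀ x y : g, (inner ℝ x y : ℝ) = Φ x y := fun _ _ => rfl
  set A := LieAlgebra.ad ℝ g v with hA
  have hskew : ∀ x y : g, (inner ℝ (A x) y : ℝ) = - inner ℝ x (A y) := by
    intro x y
    rw [hInner, hInner]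
    simpa [hA] using hinv v x y
  let b := stdOrthonormalBasis ℝ g
  have htr : killingForm ℝ g v v =
      ∑ i, (inner ℝ (b i) (A (A (b i))) : ℝ) := by
    rw [killingForm_apply_apply,
      LinearMap.trace_eq_matrix_trace ℝ b.toBasis, Matrix.trace]
    refine Finset.sum_congr rfl fun i _ => ?_
    rw [Matrix.diag_apply, LinearMap.toMatrix_apply, OrthonormalBasis.coe_toBasis,
      OrthonormalBasis.coe_toBasis_repr_apply, b.repr_apply_apply]
    rfl
  have hterm : ∀ i, (inner ℝ (b i) (A (A (b i))) : ℝ) = - inner ℝ (A (b i)) (A (b i)) := by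
    intro i
    rw [real_inner_comm]
    exact hskew (A (b i)) (b i)
  have hsum : ∑ i, (inner ℝ (A (b i)) (A (b i)) : ℝ) = 0 := by
    have h : (0 : ℝ) = ∑ i, -(inner ℝ (A (b i)) (A (b i)) : ℝ) := by
      rw [← hK, htr]
      exact Finset.sum_congr rfl fun i _ => hterm i
    rw [Finset.sum_neg_distrib] at h
    linarith
  have hzero : ∀ i, A (b i) = 0 := by
    intro i
    have h0 : (inner ℝ (A (b i)) (A (b i)) : ℝ) = 0 := by
      have := Finset.sum_eq_zero_iff_of_nonneg
        (fun i _ => real_inner_self_nonneg (x := A (b i))) |>.mp hsum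
      exact this i (Finset.mem_univ i)
    exact inner_self_eq_zero.mp h0
  have hA0 : A = 0 := by
    apply b.toBasis.ext
    intro i
    simpa using hzero i
  have hcenter : v ∈ LieAlgebra.center ℝ g := by
    rw [LieModule.mem_maxTrivSubmodule]
    intro x
    have : ⁅v, x⁆ = 0 := by
      have := congrFun (congrArg (fun f => f.toFun) hA0) x
      simpa [A, LieAlgebra.ad_apply] using this
    rw [← lie_skew, this, neg_zero]
  haveI := hsimple
  rw [LieAlgebra.center_eq_bot, LieSubmodule.mem_bot] at hcenter
  exact hv hcenter

lemma wallach_pair_eq (g : Type*) [LieRing g] [LieAlgebra ℝ g] [FiniteDimensional ℝ g]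
    (hcpt : IsCompactLieAlgebra g) (hsimple : LieAlgebra.IsSimple ℝ g)
    (k : LieSubalgebra ℝ g) (mi mj mk' : Submodule ℝ g)
    (horthi : ∀ x ∈ mi, ∀ y ∈ mk', killingForm ℝ g x y = 0)
    (horthj : ∀ x ∈ mj, ∀ y ∈ mk', killingForm ℝ g x y = 0)
    (hinvi : ∀ Z ∈ k, ∀ x ∈ mi, ⁅Z, x⁆ ∈ mi)
    (hinvj : ∀ Z ∈ k, ∀ x ∈ mj, ⁅Z, x⁆ ∈ mj)
    (hbr : ∀ x ∈ mi, ∀ y ∈ mj, ⁅x, y⁆ ∈ mk')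
    (hnz : ∃ x ∈ mi, ∃ y ∈ mj, ⁅x, y⁆ ≠ 0)
    (Λ : g →ₗ[ℝ] g) (μi μj : ℝ)
    (hΛi : ∀ x ∈ mi, Λ x = μi • x)
    (hΛj : ∀ x ∈ mj, Λ x = μj • x)
    (hgo : ∀ X : g, ∃ W ∈ k, ⁅W + X, Λ X⁆ = 0) : μi = μj := by
  obtain ⟨x, hx, y, hy, hxy⟩ := hnz
  obtain ⟨W, hW, heq⟩ := hgo (x + y)
  have hΛ : Λ (x + y) = μi • x + μj • y := by rw [map_add, hΛi x hx, hΛj y hy]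
  rw [hΛ] at heq
  have hyx : ⁅y, x⁆ = -⁅x, y⁆ := by rw [← lie_skew x y, neg_neg]
  have hexp : μi • ⁅W, x⁆ + μj • ⁅W, y⁆ + (μj - μi) • ⁅x, y⁆ = 0 := by
    rw [← heq]
    simp only [add_lie, lie_add, lie_smul, lie_self, smul_zero, add_zero, zero_add,
      hyx, smul_neg, sub_smul]
    module
  have hpair := congrArg (fun z => killingForm ℝ g z ⁅x, y⁆) hexp
  simp only [map_add, map_smul, LinearMap.add_apply, LinearMap.smul_apply,
    LinearMap.zero_apply, map_zero, smul_eq_mul] at hpair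
  rw [horthi ⁅W, x⁆ (hinvi W hW x hx) ⁅x, y⁆ (hbr x hx y hy),
    horthj ⁅W, y⁆ (hinvj W hW y hy) ⁅x, y⁆ (hbr x hx y hy)] at hpair
  have hBne : killingForm ℝ g ⁅x, y⁆ ⁅x, y⁆ ≠ 0 :=
    killingForm_definite_of_compact_simple g hcpt hsimple ⁅x, y⁆ hxy
  have : μj - μi = 0 := by
    rcases mul_eq_zero.mp (by linarith [hpair] : (μj - μi) * killingForm ℝ g ⁅x, y⁆ ⁅x, y⁆ = 0) with h | h
    · exact h
    · exact absurd h hBne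
  linarith

/-- Generalized Wallach situation: if a compact simple Lie algebra `g` decomposes
Killing-orthogonally as `g = k ⊕ m₁ ⊕ m₂ ⊕ m₃` with `[mᵢ, mⱼ] ⊆ mₖ` (nonzero) for distinct
indices, and a Killing-symmetric, `ad_k`-equivariant endomorphism `Λ` acting as `μᵢ·Id` on
each `mᵢ` and preserving `k` satisfies the geodesic orbit condition with respect to `k`,
then `μ₁ = μ₂ = μ₃`. -/
theorem generalized_wallach_eigenvalues_eq (g : Type*) [LieRing g] [LieAlgebra ℝ g]
    [FiniteDimensional ℝ g] (hcpt : IsCompactLieAlgebra g)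
    (hsimple : LieAlgebra.IsSimple ℝ g)
    (k : LieSubalgebra ℝ g) (m₁ m₂ m₃ : Submodule ℝ g)
    (hdecomp : k.toSubmodule ⊔ m₁ ⊔ m₂ ⊔ m₃ = ⊤)
    (horthk : ∀ x ∈ k, (∀ y ∈ m₁, killingForm ℝ g x y = 0) ∧
      (∀ y ∈ m₂, killingForm ℝ g x y = 0) ∧ (∀ y ∈ m₃, killingForm ℝ g x y = 0))
    (horth12 : ∀ x ∈ m₁, ∀ y ∈ m₂, killingForm ℝ g x y = 0)
    (horth13 : ∀ x ∈ m₁, ∀ y ∈ m₃, killingForm ℝ g x y = 0)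
    (horth23 : ∀ x ∈ m₂, ∀ y ∈ m₃, killingForm ℝ g x y = 0)
    (hinv₁ : ∀ Z ∈ k, ∀ x ∈ m₁, ⁅Z, x⁆ ∈ m₁)
    (hinv₂ : ∀ Z ∈ k, ∀ x ∈ m₂, ⁅Z, x⁆ ∈ m₂)
    (hinv₃ : ∀ Z ∈ k, ∀ x ∈ m₃, ⁅Z, x⁆ ∈ m₃)
    (hbr12 : ∀ x ∈ m₁, ∀ y ∈ m₂, ⁅x, y⁆ ∈ m₃)
    (hbr13 : ∀ x ∈ m₁, ∀ y ∈ m₃, ⁅x, y⁆ ∈ m₂)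
    (hbr23 : ∀ x ∈ m₂, ∀ y ∈ m₃, ⁅x, y⁆ ∈ m₁)
    (hnz12 : ∃ x ∈ m₁, ∃ y ∈ m₂, ⁅x, y⁆ ≠ 0)
    (hnz13 : ∃ x ∈ m₁, ∃ y ∈ m₃, ⁅x, y⁆ ≠ 0)
    (hnz23 : ∃ x ∈ m₂, ∃ y ∈ m₃, ⁅x, y⁆ ≠ 0)
    (Λ : g →ₗ[ℝ] g) (μ₁ μ₂ μ₃ : ℝ)
    (hsymm : ∀ x y : g, killingForm ℝ g (Λ x) y = killingForm ℝ g x (Λ y))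
    (hequiv : ∀ Z ∈ k, ∀ x : g, Λ ⁅Z, x⁆ = ⁅Z, Λ x⁆)
    (hΛk : ∀ x ∈ k, Λ x ∈ k.toSubmodule)
    (hΛ₁ : ∀ x ∈ m₁, Λ x = μ₁ • x)
    (hΛ₂ : ∀ x ∈ m₂, Λ x = μ₂ • x)
    (hΛ₃ : ∀ x ∈ m₃, Λ x = μ₃ • x)
    (hgo : ∀ X : g, ∃ W ∈ k, ⁅W + X, Λ X⁆ = 0) :
    μ₁ = μ₂ ∧ μ₂ = μ₃ := by
  have comm : ∀ a b : g, killingForm ℝ g a b = killingForm ℝ g b a :=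
    fun a b => LieModule.traceForm_comm ℝ g g a b
  constructor
  · exact wallach_pair_eq g hcpt hsimple k m₁ m₂ m₃ horth13 horth23 hinv₁ hinv₂ hbr12 hnz12
      Λ μ₁ μ₂ hΛ₁ hΛ₂ hgo
  · exact wallach_pair_eq g hcpt hsimple k m₂ m₃ m₁
      (fun a ha b hb => (comm a b).trans ((comm b a).trans (by rw [comm]; exact horth12 b hb a ha)))
      (fun a ha b hb => by rw [comm]; exact horth13 b hb a ha)
      hinv₂ hinv₃ hbr23 hnz23 Λ μ₂ μ₃ hΛ₂ hΛ₃ hgo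
end
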